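/- For the spiral pole selection with θ₁ = 2√π, if p = c_m θ̂ e^{iθ̂} is a spiral point with 0 ≤ θ̂ < θ₁ and p₁ = c_mθ₁e^{iθ₁}, then |p − p₁| < 2πc_m. -/

import Mathlib

lemma chord_le (x : ℝ) : ‖Complex.exp (Complex.I * x) - 1‖ ≤ |x| := by
  have hx : Complex.exp (Complex.I * x) - 1
      = Complex.ofReal (Real.cos x - 1) + Complex.ofReal (Real.sin x) * Complex.I := by
    rw [mul_comm, Complex.exp_mul_I]
    push_cast
    ring
  rw [hx, Complex.norm_def, Complex.normSq_add_mul_I]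
  have hcos : Real.cos x = 1 - 2 * Real.sin (x / 2) ^ 2 := by
    have h1 : Real.cos (2 * (x / 2)) = 2 * Real.cos (x / 2) ^ 2 - 1 := Real.cos_two_mul _
    have h2 := Real.sin_sq_add_cos_sq (x / 2)
    have h3 : (2 : ℝ) * (x / 2) = x := by ring
    rw [h3] at h1
    nlinarith
  have key : (Real.cos x - 1) ^ 2 + Real.sin x ^ 2 = (2 * Real.sin (x / 2)) ^ 2 := by
    have h2 := Real.sin_sq_add_cos_sq x
    nlinarith
  rw [key, Real.sqrt_sq_eq_abs]
  have h4 : |Real.sin (x / 2)| ≤ |x / 2| := Real.abs_sin_le_abs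
  rw [abs_mul]
  rw [abs_of_nonneg (by norm_num : (0:ℝ) ≤ 2)]
  calc 2 * |Real.sin (x / 2)| ≤ 2 * |x / 2| := by linarith
    _ = |x| := by rw [abs_div, abs_two]; ring

/-- any spiral point `p = cθ̂e^{iθ̂}` with `0 ≤ θ̂ < θ₁ = 2√π` is
within `2πc` of the first pole `p₁ = cθ₁e^{iθ₁}`. -/
theorem spiral_initial_segment (c θh : ℝ) (hc : 0 < c) (h0 : 0 ≤ θh)
    (h1 : θh < 2 * Real.sqrt Real.pi) :
    ‖((c * θh : ℝ) : ℂ) * Complex.exp (Complex.I * (θh : ℝ))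
        - ((c * (2 * Real.sqrt Real.pi) : ℝ) : ℂ) *
            Complex.exp (Complex.I * ((2 * Real.sqrt Real.pi : ℝ) : ℂ))‖
      < 2 * Real.pi * c := by
  set t : ℝ := 2 * Real.sqrt Real.pi with ht
  have ht0 : 0 < t := by
    have := Real.sqrt_pos.mpr Real.pi_pos
    positivity
  -- split the difference
  have hsplit : ((c * θh : ℝ) : ℂ) * Complex.exp (Complex.I * (θh : ℝ))
      - ((c * t : ℝ) : ℂ) * Complex.exp (Complex.I * (t : ℝ))
      = ((c * θh : ℝ) : ℂ) * Complex.exp (Complex.I * (t : ℝ))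
          * (Complex.exp (Complex.I * ((θh - t : ℝ) : ℂ)) - 1)
        + ((c * (θh - t) : ℝ) : ℂ) * Complex.exp (Complex.I * (t : ℝ)) := by
    have he : Complex.exp (Complex.I * (t : ℝ)) * Complex.exp (Complex.I * ((θh - t : ℝ) : ℂ))
        = Complex.exp (Complex.I * (θh : ℝ)) := by
      rw [← Complex.exp_add]
      push_cast
      ring_nf
    push_cast
    push_cast at he
    rw [← he]
    ring
  rw [hsplit]
  have habs1 : ‖Complex.exp (Complex.I * (t : ℝ))‖ = 1 := by
    rw [mul_comm]; exact Complex.norm_exp_ofReal_mul_I _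
  have hchord := chord_le (θh - t)
  have habs_chord : |θh - t| = t - θh := by rw [abs_of_nonpos (by linarith)]; ring
  calc ‖_‖ ≤ ‖((c * θh : ℝ) : ℂ) * Complex.exp (Complex.I * (t : ℝ))
          * (Complex.exp (Complex.I * ((θh - t : ℝ) : ℂ)) - 1)‖
        + ‖((c * (θh - t) : ℝ) : ℂ) * Complex.exp (Complex.I * (t : ℝ))‖ :=
      norm_add_le _ _
    _ ≤ c * θh * (t - θh) + c * (t - θh) := by
        rw [norm_mul, norm_mul, norm_mul, habs1, Complex.norm_real, Complex.norm_real, Real.norm_eq_abs, Real.norm_eq_abs]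
        have h2 : |c * θh| = c * θh := abs_of_nonneg (by positivity)
        have h3 : |c * (θh - t)| = c * (t - θh) := by
          rw [abs_mul, abs_of_pos hc, habs_chord]
        rw [h2, h3, mul_one, mul_one]
        have := hchord
        rw [habs_chord] at this
        nlinarith [mul_nonneg hc.le h0]
    _ = c * ((θh + 1) * (t - θh)) := by ring
    _ ≤ c * ((t + 1) / 2) ^ 2 := by
        have : (θh + 1) * (t - θh) ≤ ((t + 1) / 2) ^ 2 := by nlinarith [sq_nonneg (2 * θh + 1 - t)]
        nlinarith
    _ < 2 * Real.pi * c := by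
        have hsq : Real.sqrt Real.pi < 1.78 := by
          rw [show (1.78 : ℝ) = 1.78 from rfl]
          have : Real.pi < 1.78 ^ 2 := by nlinarith [Real.pi_lt_d2]
          exact (Real.sqrt_lt' (by norm_num)).mpr this
        have hpi : 3.14 < Real.pi := by nlinarith [Real.pi_gt_d6]
        have htlt : t < 3.56 := by rw [ht]; linarith
        have ht1 : (t + 1) / 2 < 2.28 := by linarith
        have hnn : (0:ℝ) ≤ (t + 1) / 2 := by positivity
        have : ((t + 1) / 2) ^ 2 < 2 * Real.pi := by nlinarith
        nlinarith
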